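/- (Tang–Fan–Matsufuji bound, Lemma 1.) Let z_0,…,z_{K−1} be K complex sequences of length L whose entries all have modulus 1, forming a (K,Z,L)-ZCZ sequence set. Then K·(Z+1) ≤ L; equivalently, the performance parameter ρ = K(Z+1)/L satisfies ρ ≤ 1. -/

import Mathlib

/-- Periodic cross-correlation function (PCCF) of two complex sequences of length `N`:
`φ(x,y)(u) = Σ_{n=0}^{N−1} x_n · conj(y_{(n+u) mod N})`. -/
noncomputable def pccf (N : ℕ) (x y : ℕ → ℂ) (u : ℕ) : ℂ :=
  ∑ n ∈ Finset.range N, x n * (starRingEnd ℂ) (y ((n + u) % N))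

private lemma sum_mod_shift (L : ℕ) (hL : 0 < L) (f : ℕ → ℂ) (t : ℕ) :
    ∑ n ∈ Finset.range L, f ((n + t) % L) = ∑ n ∈ Finset.range L, f n := by
  refine Finset.sum_nbij' (i := fun n => (n + t) % L) (j := fun n => (n + (L - t % L)) % L)
    ?_ ?_ ?_ ?_ ?_
  · intro a ha
    exact Finset.mem_range.mpr (Nat.mod_lt _ hL)
  · intro a ha
    exact Finset.mem_range.mpr (Nat.mod_lt _ hL)
  · intro a ha
    have ha' : a < L := Finset.mem_range.mp ha
    have h1 : ((a + t) % L + (L - t % L)) % L = (a + t + (L - t % L)) % L :=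
      Nat.mod_add_mod _ _ _
    have h2 : L * (t / L) + t % L = t := Nat.div_add_mod t L
    have h3 : t % L < L := Nat.mod_lt _ hL
    have h4 : a + t + (L - t % L) = a + L * (t / L + 1) := by
      have : L * (t / L + 1) = L * (t / L) + L := by ring
      omega
    show ((a + t) % L + (L - t % L)) % L = a
    rw [h1, h4, Nat.add_mul_mod_self_left, Nat.mod_eq_of_lt ha']
  · intro a ha
    have ha' : a < L := Finset.mem_range.mp ha
    have h1 : ((a + (L - t % L)) % L + t) % L = (a + (L - t % L) + t) % L :=
      Nat.mod_add_mod _ _ _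
    have h2 : L * (t / L) + t % L = t := Nat.div_add_mod t L
    have h3 : t % L < L := Nat.mod_lt _ hL
    have h4 : a + (L - t % L) + t = a + L * (t / L + 1) := by
      have : L * (t / L + 1) = L * (t / L) + L := by ring
      omega
    show ((a + (L - t % L)) % L + t) % L = a
    rw [h1, h4, Nat.add_mul_mod_self_left, Nat.mod_eq_of_lt ha']
  · intro a ha
    rfl

/-- Shifted cross-correlation. -/
noncomputable def pccfS (L : ℕ) (x y : ℕ → ℂ) (u v : ℕ) : ℂ :=
  ∑ n ∈ Finset.range L, x ((n + u) % L) * (starRingEnd ℂ) (y ((n + v) % L))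

private lemma pccfS_zero (L : ℕ) (x y : ℕ → ℂ) (v : ℕ) :
    pccfS L x y 0 v = pccf L x y v := by
  unfold pccfS pccf
  refine Finset.sum_congr rfl fun n hn => ?_
  have hn' : n < L := Finset.mem_range.mp hn
  rw [Nat.add_zero, Nat.mod_eq_of_lt hn']

private lemma pccfS_shift (L : ℕ) (hL : 0 < L) (x y : ℕ → ℂ) (u v t : ℕ) :
    pccfS L x y (u + t) (v + t) = pccfS L x y u v := by
  unfold pccfS
  have := sum_mod_shift L hL
    (fun n => x ((n + u) % L) * (starRingEnd ℂ) (y ((n + v) % L))) t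
  rw [← this]
  refine Finset.sum_congr rfl fun n hn => ?_
  show x ((n + (u + t)) % L) * (starRingEnd ℂ) (y ((n + (v + t)) % L)) =
    x (((n + t) % L + u) % L) * (starRingEnd ℂ) (y (((n + t) % L + v) % L))
  rw [Nat.mod_add_mod, Nat.mod_add_mod,
    show n + (u + t) = n + t + u from by ring, show n + (v + t) = n + t + v from by ring]

private lemma pccfS_conj (L : ℕ) (x y : ℕ → ℂ) (u v : ℕ) :
    pccfS L x y u v = (starRingEnd ℂ) (pccfS L y x v u) := by
  unfold pccfS
  rw [map_sum]
  refine Finset.sum_congr rfl fun n hn => ?_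
  rw [map_mul, Complex.conj_conj]
  ring

/-- **Tang–Fan–Matsufuji bound (Lemma 1).**
If `z_0, …, z_{K−1}` are `K` complex sequences of length `L ≥ 1` with unimodular entries
forming a `(K,Z,L)`-ZCZ sequence set, then `K·(Z+1) ≤ L`, i.e. the performance
parameter `ρ = K(Z+1)/L` satisfies `ρ ≤ 1`. -/
theorem tang_fan_matsufuji_bound (K Z L : ℕ) (hL : 1 ≤ L) (z : ℕ → ℕ → ℂ)
    (hmod : ∀ i < K, ∀ n < L, ‖z i n‖ = 1)
    (hauto0 : ∀ i < K, pccf L (z i) (z i) 0 = (L : ℂ))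
    (hauto : ∀ i < K, ∀ u, 1 ≤ u → u ≤ Z → pccf L (z i) (z i) u = 0)
    (hcross : ∀ i < K, ∀ j < K, i ≠ j → ∀ u ≤ Z, pccf L (z i) (z j) u = 0) :
    K * (Z + 1) ≤ L := by
  have hL0 : 0 < L := hL
  -- the shifted vectors
  set v : Fin K × Fin (Z + 1) → EuclideanSpace ℂ (Fin L) :=
    fun p => WithLp.toLp 2 (fun n : Fin L => z p.1 ((n.val + p.2.val) % L)) with hv
  -- inner products
  have hinner : ∀ p q : Fin K × Fin (Z + 1),
      (inner ℂ (v p) (v q) : ℂ) = (starRingEnd ℂ) (pccfS L (z p.1.val) (z q.1.val) p.2.val q.2.val) := by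
    intro p q
    rw [PiLp.inner_apply]
    unfold pccfS
    rw [map_sum]
    rw [← Fin.sum_univ_eq_sum_range
      (fun n => (starRingEnd ℂ) (z p.1.val ((n + p.2.val) % L) *
        (starRingEnd ℂ) (z q.1.val ((n + q.2.val) % L))))]
    refine Finset.sum_congr rfl fun n _ => ?_
    simp only [hv, PiLp.toLp_apply, RCLike.inner_apply, map_mul, Complex.conj_conj, mul_comm]
  -- key: pccfS in terms of pccf
  have hS : ∀ i j u w : ℕ, u ≤ w → pccfS L (z i) (z j) u w = pccf L (z i) (z j) (w - u) := by
    intro i j u w huw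
    have := pccfS_shift L hL0 (z i) (z j) 0 (w - u) u
    rw [Nat.zero_add, Nat.sub_add_cancel huw] at this
    rw [this, pccfS_zero]
  -- orthogonality
  have horth : ∀ p q : Fin K × Fin (Z + 1), p ≠ q → (inner ℂ (v p) (v q) : ℂ) = 0 := by
    intro p q hpq
    rw [hinner]
    suffices h : pccfS L (z p.1.val) (z q.1.val) p.2.val q.2.val = 0 by
      rw [h, map_zero]
    have key : ∀ (i j : Fin K) (u w : Fin (Z + 1)), u.val ≤ w.val → (i, u) ≠ (j, w) →
        pccfS L (z i.val) (z j.val) u.val w.val = 0 := by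
      intro i j u w huw hne
      rw [hS _ _ _ _ huw]
      by_cases hij : i = j
      · subst hij
        have huw' : u ≠ w := fun h => hne (by rw [h])
        have h1 : 1 ≤ w.val - u.val := by
          have : u.val ≠ w.val := fun h => huw' (Fin.ext h)
          omega
        exact hauto i.val i.isLt _ h1 (by omega)
      · exact hcross i.val i.isLt j.val j.isLt (fun h => hij (Fin.ext h)) _ (by omega)
    rcases le_or_gt p.2.val q.2.val with h | h
    · exact key p.1 q.1 p.2 q.2 h (by simpa using hpq)
    · rw [pccfS_conj]
      rw [key q.1 p.1 q.2 p.2 h.le (fun hh => hpq hh.symm)]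
      exact map_zero _
  -- norms
  have hnorm : ∀ p : Fin K × Fin (Z + 1), (inner ℂ (v p) (v p) : ℂ) = (L : ℂ) := by
    intro p
    rw [hinner, hS _ _ _ _ le_rfl, Nat.sub_self, hauto0 p.1.val p.1.isLt]
    exact Complex.conj_natCast L
  -- normalized family is orthonormal
  set w : Fin K × Fin (Z + 1) → EuclideanSpace ℂ (Fin L) :=
    fun p => ((Real.sqrt L : ℂ))⁻¹ • v p with hw
  have hsL : (0 : ℝ) < Real.sqrt L := Real.sqrt_pos.mpr (by exact_mod_cast hL0)
  have hsLne : ((Real.sqrt L : ℂ)) ≠ 0 := by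
    simp only [ne_eq, Complex.ofReal_eq_zero]
    exact hsL.ne'
  have hON : Orthonormal ℂ w := by
    rw [orthonormal_iff_ite]
    intro p q
    simp only [hw, inner_smul_left, inner_smul_right, map_inv₀, Complex.conj_ofReal]
    by_cases hpq : p = q
    · subst hpq
      rw [hnorm p, if_pos rfl]
      have hls : ((Real.sqrt L : ℂ)) * (Real.sqrt L : ℂ) = (L : ℂ) := by
        rw [← Complex.ofReal_mul, Real.mul_self_sqrt (by positivity)]
        norm_cast
      rw [← hls]
      field_simp
    · rw [horth p q hpq, if_neg hpq]
      simp
  have hli := hON.linearIndependent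
  have hcard := hli.fintype_card_le_finrank
  simpa [Fintype.card_prod, finrank_euclideanSpace] using hcard
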